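/- Let X be a complete metric space, f: X → ℝ∪{+∞} lower semicontinuous, x ∈ X with f(x) > 0, τ > 0, α ∈ ]0,1]. Assume that for every u ∈ X satisfying f(u) ≤ f(x), d(u,x) < α·d(x,[f≤0]), α·f(u) < τ·d(u,[f≤0]), and f(u) < τ·d(x,[f≤0]), one has α·|∇f|⋄(u) ≥ τ. Then τ·d(x,[f≤0]) ≤ f(x). -/

import Mathlib

open Filter EMetric Set Topology
open scoped ENNReal NNReal

noncomputable def epos (a : EReal) : ℝ≥0∞ := if a = ⊤ then ⊤ else ENNReal.ofReal a.toReal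

noncomputable def nslope {X : Type*} [MetricSpace X] (f : X → EReal) (x : X) : ℝ≥0∞ :=
  ⨆ u ∈ {u : X | u ≠ x}, epos (f x - max (f u) 0) / edist u x

noncomputable def lslope {X : Type*} [MetricSpace X] (f : X → EReal) (x : X) : ℝ≥0∞ :=
  Filter.limsup (fun u => epos (f x - f u) / edist u x) (𝓝[≠] x)

lemma epos_le_iff {a : EReal} {c : ℝ≥0∞} : epos a ≤ c ↔ a ≤ (c : EReal) := by
  rcases eq_or_ne a ⊤ with rfl | ha
  · have h1 : epos ⊤ = ⊤ := by simp [epos]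
    rw [h1]
    simp [top_le_iff, EReal.coe_ennreal_eq_top_iff]
  · rw [epos, if_neg ha]
    rcases eq_or_ne c ⊤ with rfl | hc
    · simp [le_top, EReal.coe_ennreal_top, (lt_top_iff_ne_top.mpr ha).le]
    · rw [ENNReal.ofReal_le_iff_le_toReal hc]
      rcases eq_or_ne a ⊥ with rfl | hb
      · simp [EReal.toReal_bot, ENNReal.toReal_nonneg]
      · have hcoe : ((c.toReal : ℝ) : EReal) = (c : EReal) := by
          lift c to ℝ≥0 using hc
          simp [EReal.coe_nnreal_eq_coe_real, ENNReal.coe_toReal]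
        constructor
        · intro h
          calc a = (a.toReal : EReal) := (EReal.coe_toReal ha hb).symm
            _ ≤ (c.toReal : EReal) := by exact_mod_cast h
            _ = c := hcoe
        · intro h
          have := EReal.toReal_le_toReal h hb (by rw [← hcoe]; exact EReal.coe_ne_top _)
          rwa [← hcoe, EReal.toReal_coe] at this

lemma lt_epos_iff {a : EReal} {c : ℝ≥0∞} : c < epos a ↔ (c : EReal) < a := by
  rw [← not_le, ← not_le, epos_le_iff]

lemma coe_epos {a : EReal} (ha : 0 ≤ a) : ((epos a : ℝ≥0∞) : EReal) = a := by
  rcases eq_or_ne a ⊤ with rfl | hat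
  · simp [epos]
  · have hb : a ≠ ⊥ := fun h => by simp [h] at ha
    have hnn : 0 ≤ a.toReal := by
      have := EReal.toReal_le_toReal ha (by simp) hat
      simpa using this
    rw [epos, if_neg hat, EReal.coe_ennreal_ofReal, max_eq_left hnn, EReal.coe_toReal hat hb]

/-- Ekeland-type variational principle for `ℝ≥0∞`-valued lower semicontinuous functions. -/
theorem ekeland_aux {X : Type*} [MetricSpace X] [CompleteSpace X] (g : X → ℝ≥0∞)
    (hg : LowerSemicontinuous g) (x : X) (hx : g x ≠ ⊤) (K : ℝ≥0∞) (hK0 : K ≠ 0)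
    (hKtop : K ≠ ⊤) :
    ∃ u : X, g u + K * edist u x ≤ g x ∧ ∀ v : X, v ≠ u → g u < g v + K * edist v u := by
  classical
  set P : X → X → Prop := fun w v => g v + K * edist v w ≤ g w with hPdef
  have Prefl : ∀ w, P w w := fun w => by simp [P]
  have Ptrans : ∀ w v v', P w v → P v v' → P w v' := by
    intro w v v' h1 h2
    have htri : K * edist v' w ≤ K * edist v' v + K * edist v w := by
      rw [← mul_add]; gcongr; exact edist_triangle _ _ _
    calc g v' + K * edist v' w ≤ g v' + (K * edist v' v + K * edist v w) := by
          exact add_le_add_right htri _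
      _ = (g v' + K * edist v' v) + K * edist v w := by ring
      _ ≤ g v + K * edist v w := add_le_add_left h2 _
      _ ≤ g w := h1
  have key : ∀ (n : ℕ) (w : X), ∃ v,
      g w ≠ ⊤ → (P w v ∧ ∀ v', P w v' → g v ≤ g v' + 2⁻¹ ^ n) := by
    intro n w
    by_cases hw : g w = ⊤
    · exact ⟨w, fun h => absurd hw h⟩
    · have hm : (⨅ v ∈ {v | P w v}, g v) ≤ g w := iInf₂_le w (Prefl w)
      have hδ : (2⁻¹ : ℝ≥0∞) ^ n ≠ 0 := pow_ne_zero n (ENNReal.inv_ne_zero.mpr (by simp))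
      have hlt : (⨅ v ∈ {v | P w v}, g v) < (⨅ v ∈ {v | P w v}, g v) + 2⁻¹ ^ n :=
        ENNReal.lt_add_right (hm.trans_lt (lt_top_iff_ne_top.mpr hw)).ne hδ
      rw [iInf_lt_iff] at hlt
      obtain ⟨v, hv⟩ := hlt
      rw [iInf_lt_iff] at hv
      obtain ⟨hv1, hv2⟩ := hv
      exact ⟨v, fun _ => ⟨hv1, fun v' hv' =>
        hv2.le.trans (add_le_add_left (iInf₂_le v' hv') _)⟩⟩
  choose F hF using key
  set u : ℕ → X := fun n => Nat.rec x (fun n w => F n w) n with hudef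
  have hu0 : u 0 = x := rfl
  have hus : ∀ n, u (n + 1) = F n (u n) := fun n => rfl
  have htop : ∀ n, g (u n) ≠ ⊤ := by
    intro n
    induction n with
    | zero => exact hx
    | succ n ih =>
      have := (hF n (u n) ih).1
      rw [← hus n] at this
      exact fun h => ih (top_le_iff.mp (le_trans (h ▸ le_self_add) this))
  have hstep : ∀ n, P (u n) (u (n + 1)) := by
    intro n; rw [hus n]; exact (hF n (u n) (htop n)).1
  have happrox : ∀ n v', P (u n) v' → g (u (n + 1)) ≤ g v' + 2⁻¹ ^ n := by
    intro n; rw [hus n]; exact (hF n (u n) (htop n)).2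
  have hchain : ∀ n m, n ≤ m → P (u n) (u m) := by
    intro n m hnm
    induction m, hnm using Nat.le_induction with
    | base => exact Prefl _
    | succ m hm ih => exact Ptrans _ _ _ ih (hstep m)
  have hbound : ∀ N, g (u N) + K * ∑ i ∈ Finset.range N, edist (u (i + 1)) (u i) ≤ g x := by
    intro N
    induction N with
    | zero => simp [hu0]
    | succ N ih =>
      rw [Finset.sum_range_succ, mul_add]
      calc g (u (N + 1)) + (K * ∑ i ∈ Finset.range N, edist (u (i + 1)) (u i)
              + K * edist (u (N + 1)) (u N))
          = (g (u (N + 1)) + K * edist (u (N + 1)) (u N))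
              + K * ∑ i ∈ Finset.range N, edist (u (i + 1)) (u i) := by ring
        _ ≤ g (u N) + K * ∑ i ∈ Finset.range N, edist (u (i + 1)) (u i) :=
            add_le_add_left (hstep N) _
        _ ≤ g x := ih
  have hsum : (∑' i, edist (u i) (u (i + 1))) ≠ ⊤ := by
    have hpart : ∀ N, ∑ i ∈ Finset.range N, edist (u i) (u (i + 1)) ≤ g x / K := by
      intro N
      rw [ENNReal.le_div_iff_mul_le (Or.inl hK0) (Or.inl hKtop)]
      calc (∑ i ∈ Finset.range N, edist (u i) (u (i + 1))) * K
          = K * ∑ i ∈ Finset.range N, edist (u (i + 1)) (u i) := by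
            rw [mul_comm]; congr 1; exact Finset.sum_congr rfl fun i _ => edist_comm _ _
        _ ≤ g x := le_trans le_add_self (hbound N)
    rw [ENNReal.tsum_eq_iSup_nat]
    exact ((iSup_le hpart).trans_lt (ENNReal.div_lt_top hx hK0)).ne
  have hcauchy : CauchySeq u := cauchySeq_of_edist_le_of_tsum_ne_top _ (fun n => le_rfl) hsum
  obtain ⟨y, hy⟩ := cauchySeq_tendsto_of_complete hcauchy
  have hPy : ∀ n, P (u n) y := by
    intro n
    by_contra hcon
    have hlt : g (u n) < g y + K * edist y (u n) := lt_of_not_ge hcon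
    have hged : ∀ m, n ≤ m → g (u m) + K * edist (u m) (u n) ≤ g (u n) := fun m hm => hchain n m hm
    have htend : Tendsto (fun m => K * edist (u m) (u n)) atTop (𝓝 (K * edist y (u n))) :=
      ENNReal.Tendsto.const_mul (hy.edist tendsto_const_nhds) (Or.inr hKtop)
    rcases eq_or_ne (g y) 0 with h0 | h0
    · rw [h0, zero_add] at hlt
      have hev : ∀ᶠ m in atTop, g (u n) < K * edist (u m) (u n) :=
        htend.eventually (eventually_gt_nhds hlt)
      obtain ⟨m, hm1, hm2⟩ := (hev.and (eventually_ge_atTop n)).exists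
      exact absurd ((le_add_self.trans (hged m hm2))) (not_le.mpr hm1)
    · rcases eq_or_ne (K * edist y (u n)) 0 with h0' | h0'
      · rw [h0', add_zero] at hlt
        have hev : ∀ᶠ z in 𝓝 y, g (u n) < g z := hg y _ hlt
        obtain ⟨m, hm1, hm2⟩ := ((hy.eventually hev).and (eventually_ge_atTop n)).exists
        exact absurd ((le_self_add.trans (hged m hm2))) (not_le.mpr hm1)
      · obtain ⟨a, ha, b, hb, hab⟩ := ENNReal.exists_lt_add_of_lt_add hlt h0 h0'
        have hev1 : ∀ᶠ m in atTop, a < g (u m) := hy.eventually (hg y a ha)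
        have hev2 : ∀ᶠ m in atTop, b < K * edist (u m) (u n) :=
          htend.eventually (eventually_gt_nhds hb)
        obtain ⟨m, ⟨hm1, hm2⟩, hm3⟩ := ((hev1.and hev2).and (eventually_ge_atTop n)).exists
        have : g (u n) < g (u m) + K * edist (u m) (u n) :=
          hab.trans (ENNReal.add_lt_add hm1 hm2)
        exact absurd (hged m hm3) (not_le.mpr this)
  refine ⟨y, by simpa [hu0] using hPy 0, ?_⟩
  intro v hv
  by_contra hcon
  have hPv : P y v := not_lt.mp hcon
  have hle : ∀ n, g y ≤ g v + 2⁻¹ ^ n := by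
    intro n
    have h1 : P (u n) v := Ptrans _ _ _ (hPy n) hPv
    have h2 : g (u (n + 1)) ≤ g v + 2⁻¹ ^ n := happrox n v h1
    exact (le_self_add.trans (hPy (n + 1))).trans h2
  have hgv : g y ≤ g v := by
    refine ENNReal.le_of_forall_pos_le_add fun ε hε _ => ?_
    obtain ⟨n, hn⟩ := ENNReal.exists_inv_two_pow_lt
      (show ((ε : ℝ≥0∞)) ≠ 0 from by exact_mod_cast hε.ne')
    exact (hle n).trans (add_le_add_right hn.le _)
  have hvtop : g v ≠ ⊤ := by
    intro h
    have : (⊤ : ℝ≥0∞) ≤ g y := h ▸ le_self_add.trans hPv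
    exact htop 0 (top_le_iff.mp (by simpa [hu0] using this.trans (le_self_add.trans (hPy 0))))
  have h2 : g v + K * edist v y ≤ g v + 0 := by simpa using hPv.trans hgv
  have h3 : K * edist v y = 0 := le_antisymm ((ENNReal.add_le_add_iff_left hvtop).mp h2) zero_le
  rcases mul_eq_zero.mp h3 with h | h
  · exact hK0 h
  · exact hv (edist_eq_zero.mp h)

/-- Proposition 2.1(i) with the nonlocal lslope: the sufficient condition at a fixed
point `x` with `f(x) > 0` yields the error bound inequality `τ·d(x,[f≤0]) ≤ f(x)`. -/
theorem error_bound_at_point {X : Type*} [MetricSpace X] [CompleteSpace X]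
    (f : X → EReal) (hbot : ∀ u, f u ≠ ⊥) (hlsc : LowerSemicontinuous f)
    (x : X) (hpos : 0 < f x) (τ α : ℝ) (hτ : 0 < τ) (hα : α ∈ Set.Ioc (0 : ℝ) 1)
    (h : ∀ u : X, f u ≤ f x →
      edist u x < ENNReal.ofReal α * EMetric.infEdist x {v | f v ≤ 0} →
      (α : EReal) * f u <
        ((ENNReal.ofReal τ * EMetric.infEdist u {v | f v ≤ 0} : ℝ≥0∞) : EReal) →
      f u < ((ENNReal.ofReal τ * EMetric.infEdist x {v | f v ≤ 0} : ℝ≥0∞) : EReal) →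
      ENNReal.ofReal τ ≤ ENNReal.ofReal α * nslope f u) :
    ((ENNReal.ofReal τ * EMetric.infEdist x {v | f v ≤ 0} : ℝ≥0∞) : EReal) ≤ f x := by
  classical
  set S := {v : X | f v ≤ 0} with hS
  set D := EMetric.infEdist x S with hD
  rcases eq_or_ne (f x) ⊤ with htop | htop
  · rw [htop]; exact le_top
  by_contra hcon
  have h' : f x < ((ENNReal.ofReal τ * D : ℝ≥0∞) : EReal) := lt_of_not_ge hcon
  set g : X → ℝ≥0∞ := fun v => epos (max (f v) 0) with hg
  have hglsc : LowerSemicontinuous g := by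
    intro x₀ c hc
    have hc' : (c : EReal) < max (f x₀) 0 := lt_epos_iff.mp hc
    rcases lt_or_ge (c : EReal) 0 with hc0 | hc0
    · filter_upwards with z
      exact lt_epos_iff.mpr (hc0.trans_le (le_max_right _ _))
    · have hcf : (c : EReal) < f x₀ := by
        rcases max_cases (f x₀) 0 with ⟨heq, _⟩ | ⟨heq, hle⟩
        · rwa [heq] at hc'
        · rw [heq] at hc'
          exact absurd hc' (not_lt.mpr hc0)
      filter_upwards [hlsc x₀ _ hcf] with z hz
      exact lt_epos_iff.mpr (hz.trans_le (le_max_left _ _))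
  have hgx : g x = epos (f x) := by rw [hg]; simp only; rw [max_eq_left hpos.le]
  have hgxtop : g x ≠ ⊤ := by rw [hgx, epos, if_neg htop]; exact ENNReal.ofReal_ne_top
  have hfx : ((g x : ℝ≥0∞) : EReal) = f x := by rw [hgx]; exact coe_epos hpos.le
  have hgx0 : g x ≠ 0 := by
    rw [hgx]
    exact (lt_epos_iff.mpr (by simpa using hpos)).ne'
  have hDgx : (g x : ℝ≥0∞) < ENNReal.ofReal τ * D := by
    rw [← EReal.coe_ennreal_lt_coe_ennreal_iff, hfx]; exact h'
  obtain ⟨τ', hτ'0, hτ'τ, hτ'D⟩ :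
      ∃ τ' : ℝ, 0 < τ' ∧ τ' < τ ∧ g x < ENNReal.ofReal τ' * D := by
    rcases eq_or_ne D ⊤ with hDt | hDt
    · refine ⟨τ / 2, by linarith, by linarith, ?_⟩
      rw [hDt, ENNReal.mul_top (by simp [ENNReal.ofReal_eq_zero]; linarith)]
      exact lt_top_iff_ne_top.mpr hgxtop
    · have hD0 : D ≠ 0 := by
        intro h0
        rw [h0, mul_zero] at hDgx
        simp at hDgx
      have hDr : 0 < D.toReal := ENNReal.toReal_pos hD0 hDt
      have hmt : (ENNReal.ofReal τ * D) ≠ ⊤ := ENNReal.mul_lt_top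
        (lt_top_iff_ne_top.mpr ENNReal.ofReal_ne_top) (lt_top_iff_ne_top.mpr hDt) |>.ne
      have hFr : (g x).toReal < τ * D.toReal := by
        have := (ENNReal.toReal_lt_toReal hgxtop hmt).mpr hDgx
        rwa [ENNReal.toReal_mul, ENNReal.toReal_ofReal hτ.le] at this
      set F := (g x).toReal with hF
      have hF0 : 0 ≤ F := ENNReal.toReal_nonneg
      refine ⟨(F / D.toReal + τ) / 2, ?_, ?_, ?_⟩
      · have : 0 ≤ F / D.toReal := div_nonneg hF0 hDr.le
        linarith
      · have : F / D.toReal < τ := (div_lt_iff₀ hDr).mpr hFr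
        linarith
      · have hlt : F < (F / D.toReal + τ) / 2 * D.toReal := by
          have h1 : F / D.toReal < (F / D.toReal + τ) / 2 := by
            have : F / D.toReal < τ := (div_lt_iff₀ hDr).mpr hFr
            linarith
          calc F = F / D.toReal * D.toReal := by field_simp
            _ < (F / D.toReal + τ) / 2 * D.toReal := by
                exact mul_lt_mul_of_pos_right h1 hDr
        calc g x = ENNReal.ofReal F := (ENNReal.ofReal_toReal hgxtop).symm
          _ < ENNReal.ofReal ((F / D.toReal + τ) / 2 * D.toReal) := by
              rw [ENNReal.ofReal_lt_ofReal_iff (lt_of_le_of_lt hF0 hlt)]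
              exact hlt
          _ = ENNReal.ofReal ((F / D.toReal + τ) / 2) * ENNReal.ofReal D.toReal := by
              rw [ENNReal.ofReal_mul]
              positivity
          _ = ENNReal.ofReal ((F / D.toReal + τ) / 2) * D := by
              rw [ENNReal.ofReal_toReal hDt]
  have hα0 : ENNReal.ofReal α ≠ 0 := (ENNReal.ofReal_pos.mpr hα.1).ne'
  have hαt : ENNReal.ofReal α ≠ ⊤ := ENNReal.ofReal_ne_top
  have hτ'0' : ENNReal.ofReal τ' ≠ 0 := (ENNReal.ofReal_pos.mpr hτ'0).ne'
  have hτ't : ENNReal.ofReal τ' ≠ ⊤ := ENNReal.ofReal_ne_top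
  set K : ℝ≥0∞ := ENNReal.ofReal τ' / ENNReal.ofReal α with hK
  have hαK : ENNReal.ofReal α * K = ENNReal.ofReal τ' := ENNReal.mul_div_cancel hα0 hαt
  have hK0 : K ≠ 0 := by
    intro h0
    rw [hK, ENNReal.div_eq_zero_iff] at h0
    rcases h0 with h0 | h0
    · exact hτ'0' h0
    · exact hαt h0
  have hKt : K ≠ ⊤ := (ENNReal.div_lt_top hτ't hα0).ne
  obtain ⟨u, hu1, hu2⟩ := ekeland_aux g hglsc x hgxtop K hK0 hKt
  have hgux : g u ≤ g x := le_self_add.trans hu1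
  have hKe : K * edist u x ≤ g x := le_add_self.trans hu1
  -- premise 2
  have hedist : edist u x < ENNReal.ofReal α * D := by
    have h1 : K * edist u x < K * (ENNReal.ofReal α * D) := by
      refine hKe.trans_lt ?_
      rw [← mul_assoc, mul_comm K (ENNReal.ofReal α), hαK]
      exact hτ'D
    exact (ENNReal.mul_lt_mul_iff_right hK0 hKt).mp h1
  -- f u > 0
  have hfu : 0 < f u := by
    by_contra h0
    have hmem : u ∈ S := le_of_not_gt h0
    have h1 : D ≤ edist u x := by
      rw [hD, edist_comm]
      exact EMetric.infEdist_le_edist_of_mem hmem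
    have h2 : ENNReal.ofReal α * D ≤ D := by
      calc ENNReal.ofReal α * D ≤ 1 * D := by gcongr; exact ENNReal.ofReal_le_one.mpr hα.2
        _ = D := one_mul D
    exact absurd (h1.trans_lt (hedist.trans_le h2)) (lt_irrefl D)
  have hguf : g u = epos (f u) := by rw [hg]; simp only; rw [max_eq_left hfu.le]
  have hgut : g u ≠ ⊤ := fun ht => hgxtop (top_le_iff.mp (ht ▸ hgux))
  have hfueq : ((g u : ℝ≥0∞) : EReal) = f u := by rw [hguf]; exact coe_epos hfu.le
  have hgu0 : g u ≠ 0 := by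
    rw [hguf]
    exact (lt_epos_iff.mpr (by simpa using hfu)).ne'
  -- premise 1
  have hp1 : f u ≤ f x := by
    rw [← hfueq, ← hfx]
    exact EReal.coe_ennreal_le_coe_ennreal_iff.mpr hgux
  -- premise 3
  set Du := EMetric.infEdist u S with hDu
  have hguv : ∀ v ∈ S, g u < K * edist v u := by
    intro v hv
    have hvne : v ≠ u := by
      intro h0
      rw [h0] at hv
      exact absurd (lt_of_lt_of_le hfu hv) (by simp)
    have hgv : g v = 0 := by
      rw [hg]; simp only
      rw [max_eq_right hv]
      simp [epos]
    have := hu2 v hvne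
    rwa [hgv, zero_add] at this
  have hkey : ∀ v ∈ S, ENNReal.ofReal α * g u ≤ ENNReal.ofReal τ' * edist u v := by
    intro v hv
    calc ENNReal.ofReal α * g u ≤ ENNReal.ofReal α * (K * edist v u) := by
          gcongr; exact (hguv v hv).le
      _ = (ENNReal.ofReal α * K) * edist v u := by rw [mul_assoc]
      _ = ENNReal.ofReal τ' * edist u v := by rw [hαK, edist_comm]
  have hDule : ENNReal.ofReal α * g u ≤ ENNReal.ofReal τ' * Du := by
    have h1 : (ENNReal.ofReal α * g u) / ENNReal.ofReal τ' ≤ Du := by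
      rw [hDu]
      refine EMetric.le_infEdist.mpr fun v hv => ?_
      rw [ENNReal.div_le_iff_le_mul (Or.inl hτ'0') (Or.inl hτ't), mul_comm (edist u v)]
      exact hkey v hv
    calc ENNReal.ofReal α * g u
        = ENNReal.ofReal τ' * ((ENNReal.ofReal α * g u) / ENNReal.ofReal τ') :=
          (ENNReal.mul_div_cancel hτ'0' hτ't).symm
      _ ≤ ENNReal.ofReal τ' * Du := by gcongr
  have hstrict : ENNReal.ofReal α * g u < ENNReal.ofReal τ * Du := by
    rcases eq_or_ne Du ⊤ with hDt | hDt
    · rw [hDt, ENNReal.mul_top (ENNReal.ofReal_pos.mpr hτ).ne']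
      exact ENNReal.mul_lt_top (lt_top_iff_ne_top.mpr hαt) (lt_top_iff_ne_top.mpr hgut)
    · have hDu0 : Du ≠ 0 := by
        intro h0
        rw [h0, mul_zero] at hDule
        exact absurd (le_antisymm hDule zero_le) (mul_ne_zero hα0 hgu0)
      refine hDule.trans_lt ?_
      exact (ENNReal.mul_lt_mul_iff_left hDu0 hDt).mpr
        ((ENNReal.ofReal_lt_ofReal_iff hτ).mpr hτ'τ)
  have hαcoe : ((α : ℝ) : EReal) = ((ENNReal.ofReal α : ℝ≥0∞) : EReal) := by
    rw [EReal.coe_ennreal_ofReal, max_eq_left hα.1.le]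
  have hp3 : (α : EReal) * f u <
      ((ENNReal.ofReal τ * EMetric.infEdist u S : ℝ≥0∞) : EReal) := by
    rw [← hfueq, hαcoe, ← EReal.coe_ennreal_mul]
    exact EReal.coe_ennreal_lt_coe_ennreal_iff.mpr hstrict
  -- premise 4
  have hp4 : f u < ((ENNReal.ofReal τ * D : ℝ≥0∞) : EReal) := hp1.trans_lt h'
  have hτle := h u hp1 hedist hp3 hp4
  -- contradiction via nslope bound
  have hns : nslope f u ≤ K := by
    rw [nslope]
    refine iSup₂_le fun v hv => ?_
    have hvne : v ≠ u := hv
    have hene : edist v u ≠ 0 := (edist_pos.mpr hvne).ne'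
    rw [ENNReal.div_le_iff_le_mul (Or.inl hene) (Or.inl (edist_ne_top v u))]
    rw [epos_le_iff]
    rcases eq_or_ne (max (f v) 0) ⊤ with hMt | hMt
    · rw [hMt, EReal.sub_top]
      exact bot_le
    · have h1 : g u ≤ g v + K * edist v u := (hu2 v hvne).le
      have h2 : f u ≤ ((g v + K * edist v u : ℝ≥0∞) : EReal) := by
        rw [← max_eq_left hfu.le]
        exact epos_le_iff.mp h1
      rw [EReal.coe_ennreal_add] at h2
      have h3 : ((g v : ℝ≥0∞) : EReal) = max (f v) 0 := coe_epos (le_max_right _ _)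
      rw [h3] at h2
      exact EReal.sub_le_of_le_add' h2
  have hfin : ENNReal.ofReal τ ≤ ENNReal.ofReal τ' := by
    calc ENNReal.ofReal τ ≤ ENNReal.ofReal α * nslope f u := hτle
      _ ≤ ENNReal.ofReal α * K := by gcongr
      _ = ENNReal.ofReal τ' := hαK
  exact absurd hfin (not_le.mpr ((ENNReal.ofReal_lt_ofReal_iff hτ).mpr hτ'τ))
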